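/- For all integers 0 ≤ k ≤ j, the following identity holds in ℚ(q, a): ∑_{h=k}^{j} (−q)^h a^h q^{h² − 2jh} [h; k]_+ [j; h]_+ = (−q)^k a^k q^{k² − 2jk} (a q^{2+2k−2j}; q²)_{j−k} [j; k]_+. (This is the product form of the rescaled top twist rule applied to the basis web RI[j,k].) -/

import Mathlib

noncomputable section

open Finset

/-- The field `ℚ(q, a)` of rational functions in two variables. -/
abbrev F : Type := FractionRing (MvPolynomial (Fin 2) ℚ)

/-- The variable `q`. -/
def q : F := algebraMap (MvPolynomial (Fin 2) ℚ) F (MvPolynomial.X 0)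

/-- The variable `a`. -/
def a : F := algebraMap (MvPolynomial (Fin 2) ℚ) F (MvPolynomial.X 1)

/-- The q-Pochhammer symbol `(x; y)_n = ∏_{j=0}^{n-1} (1 - x yʲ)`. -/
def qPoch (x y : F) (n : ℕ) : F := ∏ i ∈ Finset.range n, (1 - x * y ^ i)

/-- `(q²;q²)_m = ∏_{i=1}^{m} (1 - q^{2i})`. -/
def qp (m : ℕ) : F := qPoch (q ^ 2) (q ^ 2) m

/-- The positive quantum binomial coefficient `[N; k]₊`. -/
def qbin (N k : ℕ) : F := qp N / (qp k * qp (N - k))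

lemma hq : q ≠ 0 := by
  have hinj := IsFractionRing.injective (MvPolynomial (Fin 2) ℚ) F
  intro h
  rw [q, show (0:F) = algebraMap (MvPolynomial (Fin 2) ℚ) F 0 by simp] at h
  exact MvPolynomial.X_ne_zero 0 (hinj h)

lemma one_sub_q2pow_ne (n : ℕ) : (1 : F) - (q^2)^(n+1) ≠ 0 := by
  have hinj := IsFractionRing.injective (MvPolynomial (Fin 2) ℚ) F
  intro h
  have h1 : ((q^2)^(n+1) : F) = 1 := by linear_combination -h
  rw [q, ← map_pow, ← map_pow, show (1:F) = algebraMap (MvPolynomial (Fin 2) ℚ) F 1 by simp] at h1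
  have h2 := congrArg (MvPolynomial.eval (fun _ => (0:ℚ))) (hinj h1)
  simp at h2

lemma qp_succ (m : ℕ) : qp (m+1) = qp m * (1 - (q^2)^(m+1)) := by
  rw [qp, qp, qPoch, qPoch, Finset.prod_range_succ]
  ring

lemma qp_ne_zero (m : ℕ) : qp m ≠ 0 := by
  induction m with
  | zero => simp [qp, qPoch]
  | succ n ih =>
    rw [qp_succ]
    exact mul_ne_zero ih (one_sub_q2pow_ne n)

lemma qbin_zero (N : ℕ) : qbin N 0 = 1 := by
  rw [qbin]
  simp [qp, qPoch]
  exact qp_ne_zero N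

lemma qbin_self (N : ℕ) : qbin N N = 1 := by
  rw [qbin, Nat.sub_self]
  have : qp 0 = 1 := by simp [qp, qPoch]
  rw [this, mul_one]
  exact div_self (qp_ne_zero N)

lemma pascal (m i : ℕ) (h : i < m) :
    qbin (m+1) (i+1) = qbin m (i+1) + (q^2)^(m-i) * qbin m i := by
  obtain ⟨d, rfl⟩ : ∃ d, m = i + 1 + d := ⟨m - i - 1, by omega⟩
  have e1 : (i + 1 + d + 1) - (i + 1) = d + 1 := by omega
  have e2 : (i + 1 + d) - (i + 1) = d := by omega
  have e3 : (i + 1 + d) - i = d + 1 := by omega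
  have e4 : (i + 1 + d) - i = d + 1 := by omega
  rw [qbin, qbin, qbin, e1, e2, e3]
  have h1 : qp (i + 1 + d + 1) = qp (i + 1 + d) * (1 - (q^2)^(i+1+d+1)) := qp_succ _
  have h2 : qp (d + 1) = qp d * (1 - (q^2)^(d+1)) := qp_succ _
  have h3 : qp (i + 1) = qp i * (1 - (q^2)^(i+1)) := qp_succ _
  rw [h1, h2, h3]
  have n1 := qp_ne_zero (i+1+d)
  have n2 := qp_ne_zero d
  have n3 := qp_ne_zero i
  have n4 := one_sub_q2pow_ne (i+d+1)
  have n5 := one_sub_q2pow_ne d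
  have n6 := one_sub_q2pow_ne i
  have hrw : i + 1 + d + 1 = (i + d + 1) + 1 := by omega
  rw [hrw]
  field_simp
  ring

lemma nat_sub : (i + 1 + d + 1 : ℕ) = i + d + 2 := by omega

/-- Gauss binomial theorem. -/
lemma gauss (m : ℕ) (x : F) :
    ∑ i ∈ range (m+1), (-1:F)^i * q^(i*i) / q^i * x^i * qbin m i = qPoch x (q^2) m := by
  induction m with
  | zero => simp [qPoch, qbin_zero]
  | succ n ih =>
    have hfg : ∀ i ∈ range n,
        (-1:F)^(i+1) * q^((i+1)*(i+1)) / q^(i+1) * x^(i+1) * qbin (n+1) (i+1)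
        = (-1:F)^(i+1) * q^((i+1)*(i+1)) / q^(i+1) * x^(i+1) * qbin n (i+1)
          - x * (q^2)^n * ((-1:F)^i * q^(i*i) / q^i * x^i * qbin n i) := by
      intro i hi
      rw [mem_range] at hi
      rw [pascal n i hi]
      obtain ⟨d, rfl⟩ : ∃ d, n = i + 1 + d := ⟨n - i - 1, by omega⟩
      have e : (i + 1 + d) - i = d + 1 := by omega
      rw [e]
      field_simp [hq]
      ring
    rw [qPoch, Finset.prod_range_succ, ← qPoch, ← ih]
    rw [Finset.sum_range_succ, Finset.sum_range_succ']
    rw [Finset.sum_congr rfl hfg]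
    rw [Finset.sum_sub_distrib]
    have hf0 : (-1:F)^0 * q^(0*0) / q^0 * x^0 * qbin (n+1) 0
        = (-1:F)^0 * q^(0*0) / q^0 * x^0 * qbin n 0 := by
      rw [qbin_zero, qbin_zero]
    have hftop : (-1:F)^(n+1) * q^((n+1)*(n+1)) / q^(n+1) * x^(n+1) * qbin (n+1) (n+1)
        = - (x * (q^2)^n * ((-1:F)^n * q^(n*n) / q^n * x^n * qbin n n)) := by
      rw [qbin_self, qbin_self]
      field_simp [hq]
      ring
    rw [hf0, hftop]
    rw [show ∑ i ∈ range n, x * (q^2)^n * ((-1:F)^i * q^(i*i) / q^i * x^i * qbin n i)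
        = x * (q^2)^n * ∑ i ∈ range n, ((-1:F)^i * q^(i*i) / q^i * x^i * qbin n i)
        from (Finset.mul_sum _ _ _).symm]
    have expand : ∑ i ∈ range (n+1), (-1:F)^i * q^(i*i) / q^i * x^i * qbin n i
        = (∑ i ∈ range n, (-1:F)^(i+1) * q^((i+1)*(i+1)) / q^(i+1) * x^(i+1) * qbin n (i+1))
          + (-1:F)^0 * q^(0*0) / q^0 * x^0 * qbin n 0 := Finset.sum_range_succ' _ _
    have expand2 : ∑ i ∈ range (n+1), (-1:F)^i * q^(i*i) / q^i * x^i * qbin n i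
        = (∑ i ∈ range n, (-1:F)^i * q^(i*i) / q^i * x^i * qbin n i)
          + (-1:F)^n * q^(n*n) / q^n * x^n * qbin n n := Finset.sum_range_succ _ _
    rw [mul_sub, mul_one]
    nth_rewrite 1 [expand]
    nth_rewrite 1 [expand2]
    ring

/-- trinomial revision -/
lemma qbin_mul (k i d : ℕ) :
    qbin (k+i) k * qbin (k+i+d) (k+i) = qbin (k+i+d) k * qbin (i+d) i := by
  have e1 : (k+i) - k = i := by omega
  have e2 : (k+i+d) - (k+i) = d := by omega
  have e3 : (k+i+d) - k = i + d := by omega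
  have e4 : (i+d) - i = d := by omega
  rw [qbin, qbin, qbin, qbin, e1, e2, e3, e4]
  have n1 := qp_ne_zero k
  have n2 := qp_ne_zero i
  have n3 := qp_ne_zero d
  have n4 := qp_ne_zero (k+i)
  have n5 := qp_ne_zero (i+d)
  have n6 := qp_ne_zero (k+i+d)
  field_simp

lemma zpow_nat_sub (s t : ℕ) : q ^ ((s:ℤ) - (t:ℤ)) = q ^ s / q ^ t := by
  rw [zpow_sub₀ hq, zpow_natCast, zpow_natCast]

/-- Product form of the rescaled top twist rule on `RI[j,k]`:
`∑_{h=k}^{j} (−q)^h a^h q^{h²−2jh} [h;k]₊ [j;h]₊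
 = (−q)^k a^k q^{k²−2jk} (a q^{2+2k−2j};q²)_{j−k} [j;k]₊`. -/
theorem product_form_T_RI (j k : ℕ) (hk : k ≤ j) :
    ∑ h ∈ Finset.Icc k j,
      (-q) ^ h * a ^ h * q ^ ((h : ℤ) ^ 2 - 2 * (j : ℤ) * (h : ℤ)) * qbin h k * qbin j h =
      (-q) ^ k * a ^ k * q ^ ((k : ℤ) ^ 2 - 2 * (j : ℤ) * (k : ℤ)) *
        qPoch (a * q ^ (2 + 2 * (k : ℤ) - 2 * (j : ℤ))) (q ^ 2) (j - k) * qbin j k := by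
  obtain ⟨m, rfl⟩ : ∃ m, j = k + m := ⟨j - k, by omega⟩
  have hIcc : Finset.Icc k (k+m) = (Finset.Icc 0 m).map (addLeftEmbedding k) := by
    rw [Finset.map_add_left_Icc]; norm_num
  have hrange : Finset.Icc 0 m = Finset.range (m+1) := by
    ext x; simp
  rw [hIcc, hrange, Finset.sum_map]
  have hemb : ∀ i : ℕ, (addLeftEmbedding k) i = k + i := fun i => rfl
  set x : F := a * q ^ (2 + 2 * (k : ℤ) - 2 * ((k+m : ℕ) : ℤ)) with hx
  set C : F := (-q) ^ k * a ^ k * q ^ ((k : ℤ) ^ 2 - 2 * ((k+m : ℕ) : ℤ) * (k : ℤ)) * qbin (k+m) k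
    with hC
  have key : ∀ i ∈ Finset.range (m+1),
      (-q) ^ (addLeftEmbedding k i) * a ^ (addLeftEmbedding k i) *
        q ^ (((addLeftEmbedding k i : ℕ) : ℤ) ^ 2
            - 2 * ((k+m : ℕ) : ℤ) * ((addLeftEmbedding k i : ℕ) : ℤ)) *
        qbin (addLeftEmbedding k i) k * qbin (k+m) (addLeftEmbedding k i)
      = C * ((-1:F)^i * q^(i*i) / q^i * x^i * qbin m i) := by
    intro i hi
    rw [Finset.mem_range] at hi
    obtain ⟨d, rfl⟩ : ∃ d, m = i + d := ⟨m - i, by omega⟩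
    rw [hemb]
    have hbin : qbin (k+i) k * qbin (k+(i+d)) (k+i) = qbin (k+(i+d)) k * qbin (i+d) i := by
      rw [← add_assoc]; exact qbin_mul k i d
    rw [mul_assoc, mul_assoc, hbin]
    have hZ1 : (((k+i : ℕ)) : ℤ) ^ 2 - 2 * ((k+(i+d) : ℕ) : ℤ) * ((k+i : ℕ) : ℤ)
        = (((k+i)^2 : ℕ) : ℤ) - ((2*(k+(i+d))*(k+i) : ℕ) : ℤ) := by push_cast; ring
    have hZ2 : ((k : ℕ) : ℤ) ^ 2 - 2 * ((k+(i+d) : ℕ) : ℤ) * ((k : ℕ) : ℤ)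
        = ((k^2 : ℕ) : ℤ) - ((2*(k+(i+d))*k : ℕ) : ℤ) := by push_cast; ring
    have hZ3 : 2 + 2 * ((k : ℕ) : ℤ) - 2 * ((k+(i+d) : ℕ) : ℤ)
        = ((2+2*k : ℕ) : ℤ) - ((2*(k+(i+d)) : ℕ) : ℤ) := by push_cast; ring
    rw [hC, hx, hZ1, hZ2, hZ3, zpow_nat_sub, zpow_nat_sub, zpow_nat_sub]
    have hqp1 : q ^ (2*(k+(i+d))*(k+i)) ≠ 0 := pow_ne_zero _ hq
    have hqp2 : q ^ (2*(k+(i+d))*k) ≠ 0 := pow_ne_zero _ hq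
    have hqp3 : q ^ (2*(k+(i+d))) ≠ 0 := pow_ne_zero _ hq
    field_simp [hq]
    rw [div_pow]
    field_simp
    ring
  rw [Finset.sum_congr rfl key, ← Finset.mul_sum, gauss]
  have hsub : (k + m) - k = m := by omega
  rw [hsub, hC, hx]
  ring
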